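/- For every X ∈ [0,∞)², the determinant of the Hessian of Φ_n satisfies 2·det(D²Φ_n(X)) ≥ (n−1)·A_{n−2,n−2}·X₁^{2n−4} + (n−1)·A_{0,0}·X₂^{2n−4}, where A_{0,0} > 0 and A_{n−2,n−2} > 0. -/

import Mathlib

/-- The coefficient `a_{j,n}` of the polynomial `Φ_n`. -/
noncomputable def ajn (a b c d : ℝ) (n j : ℕ) : ℝ :=
  (n.choose j : ℝ) * ∏ k ∈ Finset.range j,
    (a * k + c * ((n : ℝ) - k - 1)) / (b * k + d * ((n : ℝ) - k - 1))

/-- The polynomial `Φ_n`. -/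
noncomputable def Phi (a b c d : ℝ) (n : ℕ) (x y : ℝ) : ℝ :=
  ∑ j ∈ Finset.range (n + 1), ajn a b c d n j * x ^ j * y ^ (n - j)


/-- Partial derivative with respect to the first variable. -/
noncomputable def pd1 (f : ℝ → ℝ → ℝ) (x y : ℝ) : ℝ := deriv (fun t => f t y) x

/-- Partial derivative with respect to the second variable. -/
noncomputable def pd2 (f : ℝ → ℝ → ℝ) (x y : ℝ) : ℝ := deriv (fun t => f x t) y

/-- The Hessian matrix of a function of two real variables. -/
noncomputable def Hess (f : ℝ → ℝ → ℝ) (x y : ℝ) : Matrix (Fin 2) (Fin 2) ℝ :=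
  !![pd1 (pd1 f) x y, pd1 (pd2 f) x y; pd2 (pd1 f) x y, pd2 (pd2 f) x y]

/-- The mobility matrix `M(X)`. -/
noncomputable def Mmat (a b c d x y : ℝ) : Matrix (Fin 2) (Fin 2) ℝ :=
  !![a * x, b * x; c * y, d * y]


/-- The coefficient `A_{j,k}`. -/
noncomputable def Ajk (a b c d : ℝ) (n j k : ℕ) : ℝ :=
  ((j : ℝ) + 2) * ((n : ℝ) - k) * ajn a b c d n (j + 2) * ajn a b c d n k
    - ((n : ℝ) - j - 1) * ((k : ℝ) + 1) * ajn a b c d n (j + 1) * ajn a b c d n (k + 1)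

/-! ### Auxiliary definitions and lemmas -/

/-- The ratio `r_j`. -/
noncomputable def rr (a b c d : ℝ) (n j : ℕ) : ℝ :=
  (a * j + c * ((n : ℝ) - j - 1)) / (b * j + d * ((n : ℝ) - j - 1))

noncomputable def uu (a b c d : ℝ) (m j : ℕ) : ℝ :=
  ((j:ℝ) + 2) * ((j:ℝ) + 1) * ajn a b c d (m+2) (j+2)
noncomputable def vv (a b c d : ℝ) (m j : ℕ) : ℝ :=
  ((j:ℝ) + 1) * ((m:ℝ) + 1 - j) * ajn a b c d (m+2) (j+1)
noncomputable def ww (a b c d : ℝ) (m j : ℕ) : ℝ :=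
  ((m:ℝ) + 2 - j) * ((m:ℝ) + 1 - j) * ajn a b c d (m+2) j

lemma den_pos {b d : ℝ} (hb : 0 < b) (hd : 0 < d) {n j : ℕ} (hn : 2 ≤ n) (hj : j < n) :
    0 < b * j + d * ((n : ℝ) - j - 1) := by
  have h1 : ((n : ℝ) - j - 1) ≥ 0 := by
    have : (j : ℝ) + 1 ≤ n := by exact_mod_cast hj
    linarith
  rcases Nat.eq_zero_or_pos j with h | h
  · subst h
    have : (2 : ℝ) ≤ n := by exact_mod_cast hn
    push_cast
    nlinarith
  · have : (1 : ℝ) ≤ j := by exact_mod_cast h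
    nlinarith

lemma rr_pos {a b c d : ℝ} (ha : 0 < a) (hb : 0 < b) (hc : 0 < c) (hd : 0 < d)
    {n j : ℕ} (hn : 2 ≤ n) (hj : j < n) : 0 < rr a b c d n j :=
  div_pos (den_pos ha hc hn hj) (den_pos hb hd hn hj)

lemma rr_mono {a b c d : ℝ} (ha : 0 < a) (hb : 0 < b) (hc : 0 < c) (hd : 0 < d)
    (habcd : b * c < a * d) {n j : ℕ} (hn : 2 ≤ n) (hj : j + 2 ≤ n) :
    rr a b c d n j < rr a b c d n (j + 1) := by
  have h1 : 0 < b * j + d * ((n : ℝ) - j - 1) := den_pos hb hd hn (by omega)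
  have h2 : 0 < b * (j+1 : ℕ) + d * ((n : ℝ) - (j+1 : ℕ) - 1) := den_pos hb hd hn (by omega)
  rw [rr, rr, div_lt_div_iff₀ h1 h2]
  have key : (a * ((j:ℕ):ℝ) + c * ((n : ℝ) - ((j:ℕ):ℝ) - 1)) * (b * ((j+1 : ℕ):ℝ) + d * ((n : ℝ) - ((j+1:ℕ):ℝ) - 1))
      + ((n:ℝ) - 1) * (a * d - b * c)
      = (a * ((j+1:ℕ):ℝ) + c * ((n : ℝ) - ((j+1:ℕ):ℝ) - 1)) * (b * ((j:ℕ):ℝ) + d * ((n : ℝ) - ((j:ℕ):ℝ) - 1)) := by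
    push_cast; ring
  have hn' : (2:ℝ) ≤ n := by exact_mod_cast hn
  nlinarith

lemma ajn_succ (a b c d : ℝ) {n j : ℕ} (hj : j < n) :
    ajn a b c d n (j + 1) = (((n : ℝ) - j) / ((j : ℝ) + 1)) * rr a b c d n j * ajn a b c d n j := by
  rw [ajn, ajn, Finset.prod_range_succ, rr]
  have h : (n.choose (j+1) : ℝ) * ((j:ℝ) + 1) = ((n:ℝ) - j) * (n.choose j : ℝ) := by
    have := Nat.choose_succ_right_eq n j
    have h2 : ((n.choose (j+1) * (j+1) : ℕ) : ℝ) = ((n.choose j * (n - j) : ℕ) : ℝ) := by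
      exact_mod_cast congrArg Nat.cast this
    push_cast [Nat.cast_sub hj.le] at h2
    linarith
  have hj1 : ((j : ℝ) + 1) ≠ 0 := by positivity
  have hch : (n.choose (j+1) : ℝ) = (((n:ℝ) - j) / ((j:ℝ) + 1)) * (n.choose j : ℝ) := by
    field_simp; linarith [h]
  rw [hch]; ring

lemma ajn_pos {a b c d : ℝ} (ha : 0 < a) (hb : 0 < b) (hc : 0 < c) (hd : 0 < d)
    {n : ℕ} (hn : 2 ≤ n) : ∀ j, j ≤ n → 0 < ajn a b c d n j := by
  intro j
  induction j with
  | zero => intro _; simp [ajn]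
  | succ i ih =>
    intro hij
    have hi : i < n := by omega
    rw [ajn_succ a b c d hi]
    have h1 : 0 < ((n : ℝ) - i) := by
      have : (i : ℝ) < n := by exact_mod_cast hi
      linarith
    have := rr_pos ha hb hc hd hn hi
    have := ih (by omega)
    positivity

section derivs

lemma deriv_poly (c : ℕ → ℝ) (e : ℕ → ℕ) (N : ℕ) (x : ℝ) :
    deriv (fun t : ℝ => ∑ j ∈ Finset.range N, c j * t ^ (e j)) x
      = ∑ j ∈ Finset.range N, c j * (e j : ℝ) * x ^ (e j - 1) := by
  have h : HasDerivAt (fun t : ℝ => ∑ j ∈ Finset.range N, c j * t ^ (e j))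
      (∑ j ∈ Finset.range N, c j * ((e j : ℝ) * x ^ (e j - 1))) x := by
    apply HasDerivAt.fun_sum
    intro j _
    exact (hasDerivAt_pow (e j) x).const_mul (c j)
  rw [h.deriv]
  exact Finset.sum_congr rfl fun j _ => by ring

lemma d1_Phi (a b c d : ℝ) (n : ℕ) (x y : ℝ) :
    deriv (fun t => Phi a b c d n t y) x
      = ∑ j ∈ Finset.range (n + 1), (ajn a b c d n j * y ^ (n - j) * (j : ℝ)) * x ^ (j - 1) := by
  have hfun : (fun t => Phi a b c d n t y)
      = fun t : ℝ => ∑ j ∈ Finset.range (n + 1), (ajn a b c d n j * y ^ (n - j)) * t ^ j := by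
    funext t
    exact Finset.sum_congr rfl fun j _ => by ring
  rw [hfun, deriv_poly]

lemma d2_Phi (a b c d : ℝ) (n : ℕ) (x y : ℝ) :
    deriv (fun t => Phi a b c d n x t) y
      = ∑ j ∈ Finset.range (n + 1), (ajn a b c d n j * x ^ j * ((n - j : ℕ) : ℝ)) * y ^ (n - j - 1) := by
  have hfun : (fun t => Phi a b c d n x t)
      = fun t : ℝ => ∑ j ∈ Finset.range (n + 1), (ajn a b c d n j * x ^ j) * t ^ (n - j) := by
    funext t
    exact Finset.sum_congr rfl fun j _ => by ring
  rw [hfun, deriv_poly]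

lemma hxx_Phi (a b c d : ℝ) (n : ℕ) (x y : ℝ) :
    pd1 (pd1 (Phi a b c d n)) x y
      = ∑ j ∈ Finset.range (n + 1),
          (ajn a b c d n j * (j : ℝ) * ((j - 1 : ℕ) : ℝ)) * x ^ (j - 2) * y ^ (n - j) := by
  simp only [pd1]
  have hfun : (fun t => deriv (fun s => Phi a b c d n s y) t)
      = fun t : ℝ => ∑ j ∈ Finset.range (n + 1), (ajn a b c d n j * y ^ (n - j) * (j : ℝ)) * t ^ (j - 1) := by
    funext t; exact d1_Phi a b c d n t y
  rw [hfun, deriv_poly]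
  refine Finset.sum_congr rfl fun j _ => by
    rw [show j - 1 - 1 = j - 2 from by omega]; ring

lemma hyy_Phi (a b c d : ℝ) (n : ℕ) (x y : ℝ) :
    pd2 (pd2 (Phi a b c d n)) x y
      = ∑ j ∈ Finset.range (n + 1),
          (ajn a b c d n j * ((n - j : ℕ) : ℝ) * ((n - j - 1 : ℕ) : ℝ)) * x ^ j * y ^ (n - j - 2) := by
  simp only [pd2]
  have hfun : (fun t => deriv (fun s => Phi a b c d n x s) t)
      = fun t : ℝ => ∑ j ∈ Finset.range (n + 1), (ajn a b c d n j * x ^ j * ((n - j : ℕ) : ℝ)) * t ^ (n - j - 1) := by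
    funext t; exact d2_Phi a b c d n x t
  rw [hfun, deriv_poly]
  refine Finset.sum_congr rfl fun j _ => by
    rw [show n - j - 1 - 1 = n - j - 2 from by omega]; ring

lemma hxy_Phi (a b c d : ℝ) (n : ℕ) (x y : ℝ) :
    pd1 (pd2 (Phi a b c d n)) x y
      = ∑ j ∈ Finset.range (n + 1),
          (ajn a b c d n j * (j : ℝ) * ((n - j : ℕ) : ℝ)) * x ^ (j - 1) * y ^ (n - j - 1) := by
  simp only [pd1, pd2]
  have hfun : (fun t => deriv (fun s => Phi a b c d n t s) y)
      = fun t : ℝ => ∑ j ∈ Finset.range (n + 1), (ajn a b c d n j * ((n - j : ℕ) : ℝ) * y ^ (n - j - 1)) * t ^ j := by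
    funext t
    rw [d2_Phi]
    exact Finset.sum_congr rfl fun j _ => by ring
  rw [hfun, deriv_poly]
  exact Finset.sum_congr rfl fun j _ => by ring

lemma hyx_Phi (a b c d : ℝ) (n : ℕ) (x y : ℝ) :
    pd2 (pd1 (Phi a b c d n)) x y
      = ∑ j ∈ Finset.range (n + 1),
          (ajn a b c d n j * (j : ℝ) * ((n - j : ℕ) : ℝ)) * x ^ (j - 1) * y ^ (n - j - 1) := by
  simp only [pd1, pd2]
  have hfun : (fun t => deriv (fun s => Phi a b c d n s t) x)
      = fun t : ℝ => ∑ j ∈ Finset.range (n + 1), (ajn a b c d n j * (j : ℝ) * x ^ (j - 1)) * t ^ (n - j) := by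
    funext t
    rw [d1_Phi]
    exact Finset.sum_congr rfl fun j _ => by ring
  rw [hfun, deriv_poly]
  exact Finset.sum_congr rfl fun j _ => by ring

end derivs

section reindex

lemma reindex_xx (a b c d : ℝ) (m : ℕ) (x y : ℝ) :
    ∑ j ∈ Finset.range (m + 2 + 1),
        (ajn a b c d (m+2) j * (j : ℝ) * ((j - 1 : ℕ) : ℝ)) * x ^ (j - 2) * y ^ (m + 2 - j)
      = ∑ j ∈ Finset.range (m + 1), uu a b c d m j * x ^ j * y ^ (m - j) := by
  rw [show m + 2 + 1 = (m + 1) + 1 + 1 from rfl, Finset.sum_range_succ', Finset.sum_range_succ']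
  simp only [Nat.cast_zero, Nat.cast_one]
  rw [show ((1 - 1 : ℕ) : ℝ) = 0 from by norm_num]
  norm_num
  refine Finset.sum_congr rfl fun j hj => ?_
  simp only [uu, show j + 1 + 1 = j + 2 from rfl]
  push_cast
  ring

lemma reindex_yy (a b c d : ℝ) (m : ℕ) (x y : ℝ) :
    ∑ j ∈ Finset.range (m + 2 + 1),
        (ajn a b c d (m+2) j * ((m + 2 - j : ℕ) : ℝ) * ((m + 2 - j - 1 : ℕ) : ℝ)) * x ^ j * y ^ (m + 2 - j - 2)
      = ∑ j ∈ Finset.range (m + 1), ww a b c d m j * x ^ j * y ^ (m - j) := by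
  rw [Finset.sum_range_succ, Finset.sum_range_succ]
  rw [show m + 2 - (m + 1) - 1 = 0 from by omega, show m + 2 - (m + 2) = 0 from by omega]
  simp only [Nat.cast_zero]
  norm_num
  refine Finset.sum_congr rfl fun j hj => ?_
  have hj' : j ≤ m := by simpa [Nat.lt_succ_iff] using hj
  simp only [ww]
  have e1 : m + 2 - j - 2 = m - j := by omega
  have e2 : ((m + 2 - j : ℕ) : ℝ) = (m : ℝ) + 2 - j := by
    rw [Nat.cast_sub (by omega)]; push_cast; ring
  have e3 : ((m + 2 - j - 1 : ℕ) : ℝ) = (m : ℝ) + 1 - j := by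
    rw [show m + 2 - j - 1 = m + 1 - j from by omega, Nat.cast_sub (by omega)]; push_cast; ring
  simp only [e1, e2, e3]
  ring

lemma reindex_xy (a b c d : ℝ) (m : ℕ) (x y : ℝ) :
    ∑ j ∈ Finset.range (m + 2 + 1),
        (ajn a b c d (m+2) j * (j : ℝ) * ((m + 2 - j : ℕ) : ℝ)) * x ^ (j - 1) * y ^ (m + 2 - j - 1)
      = ∑ j ∈ Finset.range (m + 1), vv a b c d m j * x ^ j * y ^ (m - j) := by
  rw [Finset.sum_range_succ, show m + 2 - (m + 2) = 0 from by omega]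
  rw [Finset.sum_range_succ']
  simp only [Nat.cast_zero]
  norm_num
  refine Finset.sum_congr rfl fun j hj => ?_
  have hj' : j ≤ m := by simpa [Nat.lt_succ_iff] using hj
  simp only [vv]
  rw [show m + 2 - (j + 1) - 1 = m - j from by omega,
    show m + 2 - (j + 1) = m + 1 - j from by omega, Nat.cast_sub (by omega : j ≤ m + 1)]
  push_cast
  ring

end reindex

section relations
variable {a b c d : ℝ} {m : ℕ}

lemma ww_pos (ha : 0 < a) (hb : 0 < b) (hc : 0 < c) (hd : 0 < d) {j : ℕ} (hj : j ≤ m) :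
    0 < ww a b c d m j := by
  rw [ww]
  have h0 : (j : ℝ) ≤ m := by exact_mod_cast hj
  have h1 : 0 < ajn a b c d (m+2) j := ajn_pos ha hb hc hd (by omega) j (by omega)
  have h2 : (0:ℝ) < (m:ℝ) + 2 - j := by linarith
  have h3 : (0:ℝ) < (m:ℝ) + 1 - j := by linarith
  positivity

lemma vv_eq {j : ℕ} (hj : j ≤ m) :
    vv a b c d m j = ww a b c d m j * rr a b c d (m+2) j := by
  rw [vv, ww, ajn_succ a b c d (show j < m + 2 by omega)]
  have hj1 : ((j : ℝ) + 1) ≠ 0 := by positivity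
  push_cast
  field_simp

lemma uu_eq {j : ℕ} (hj : j ≤ m) :
    uu a b c d m j = vv a b c d m j * rr a b c d (m+2) (j+1) := by
  rw [uu, vv, show j + 2 = j + 1 + 1 from rfl, ajn_succ a b c d (show j + 1 < m + 2 by omega)]
  have hj1 : ((j : ℝ) + 2) ≠ 0 := by positivity
  push_cast
  field_simp
  ring

lemma Tjj (a b c d : ℝ) (m j : ℕ) :
    uu a b c d m j * ww a b c d m j - vv a b c d m j * vv a b c d m j
      = ((j:ℝ) + 1) * ((m:ℝ) + 1 - j) * Ajk a b c d (m+2) j j := by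
  rw [uu, vv, ww, Ajk]
  push_cast
  ring

lemma key_nonneg (ha : 0 < a) (hb : 0 < b) (hc : 0 < c) (hd : 0 < d)
    (habcd : b * c < a * d) {j k : ℕ} (hj : j ≤ m) (hk : k ≤ m) :
    0 ≤ uu a b c d m j * ww a b c d m k + ww a b c d m j * uu a b c d m k
        - 2 * vv a b c d m j * vv a b c d m k := by
  rw [uu_eq hj, uu_eq hk, vv_eq hj, vv_eq hk]
  have hwj := ww_pos ha hb hc hd hj
  have hwk := ww_pos ha hb hc hd hk
  have hrj := rr_pos ha hb hc hd (show 2 ≤ m + 2 by omega) (show j < m + 2 by omega)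
  have hrk := rr_pos ha hb hc hd (show 2 ≤ m + 2 by omega) (show k < m + 2 by omega)
  have hmj := (rr_mono ha hb hc hd habcd (show 2 ≤ m + 2 by omega) (show j + 2 ≤ m + 2 by omega)).le
  have hmk := (rr_mono ha hb hc hd habcd (show 2 ≤ m + 2 by omega) (show k + 2 ≤ m + 2 by omega)).le
  set rj := rr a b c d (m+2) j
  set rk := rr a b c d (m+2) k
  set rj1 := rr a b c d (m+2) (j+1)
  set rk1 := rr a b c d (m+2) (k+1)
  set wj := ww a b c d m j
  set wk := ww a b c d m k
  have hsum : (0:ℝ) ≤ rj * rj1 + rk * rk1 - 2 * rj * rk := by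
    nlinarith [sq_nonneg (rj - rk), mul_nonneg hrj.le (sub_nonneg.2 hmj),
      mul_nonneg hrk.le (sub_nonneg.2 hmk)]
  nlinarith [mul_nonneg (mul_nonneg hwj.le hwk.le) hsum]

lemma Ajj_pos (ha : 0 < a) (hb : 0 < b) (hc : 0 < c) (hd : 0 < d)
    (habcd : b * c < a * d) {j : ℕ} (hj : j ≤ m) :
    0 < Ajk a b c d (m+2) j j := by
  have h1 : 0 < ((j:ℝ) + 1) * ((m:ℝ) + 1 - j) := by
    have : (j : ℝ) ≤ m := by exact_mod_cast hj
    nlinarith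
  have h2 := Tjj a b c d m j
  have h3 : 0 < uu a b c d m j * ww a b c d m j - vv a b c d m j * vv a b c d m j := by
    rw [uu_eq hj, vv_eq hj]
    have hwj := ww_pos ha hb hc hd hj
    have hrj := rr_pos ha hb hc hd (show 2 ≤ m + 2 by omega) (show j < m + 2 by omega)
    have hmj := rr_mono ha hb hc hd habcd (show 2 ≤ m + 2 by omega) (show j + 2 ≤ m + 2 by omega)
    set rj := rr a b c d (m+2) j
    set rj1 := rr a b c d (m+2) (j+1)
    set wj := ww a b c d m j
    nlinarith [mul_pos (mul_pos (mul_pos hwj hwj) hrj) (sub_pos.2 hmj)]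
  nlinarith
end relations

lemma expand_det (a b c d : ℝ) (m : ℕ) (x y : ℝ) :
    2 * ((∑ j ∈ Finset.range (m+1), uu a b c d m j * x ^ j * y ^ (m - j)) *
          (∑ j ∈ Finset.range (m+1), ww a b c d m j * x ^ j * y ^ (m - j)) -
        (∑ j ∈ Finset.range (m+1), vv a b c d m j * x ^ j * y ^ (m - j)) *
          (∑ j ∈ Finset.range (m+1), vv a b c d m j * x ^ j * y ^ (m - j)))
      = ∑ p ∈ Finset.range (m+1) ×ˢ Finset.range (m+1),
          (uu a b c d m p.1 * ww a b c d m p.2 + ww a b c d m p.1 * uu a b c d m p.2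
            - 2 * vv a b c d m p.1 * vv a b c d m p.2)
            * (x ^ p.1 * y ^ (m - p.1) * (x ^ p.2 * y ^ (m - p.2))) := by
  rw [Finset.sum_product]
  have hprod : ∀ f g : ℕ → ℝ,
      (∑ j ∈ Finset.range (m+1), f j * x ^ j * y ^ (m - j)) *
        (∑ k ∈ Finset.range (m+1), g k * x ^ k * y ^ (m - k))
      = ∑ j ∈ Finset.range (m+1), ∑ k ∈ Finset.range (m+1),
          f j * g k * (x ^ j * y ^ (m - j) * (x ^ k * y ^ (m - k))) := by
    intro f g
    rw [Finset.sum_mul_sum]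
    exact Finset.sum_congr rfl fun j _ => Finset.sum_congr rfl fun k _ => by ring
  have hswap : ∑ j ∈ Finset.range (m+1), ∑ k ∈ Finset.range (m+1),
        ww a b c d m j * uu a b c d m k * (x ^ j * y ^ (m - j) * (x ^ k * y ^ (m - k)))
      = ∑ j ∈ Finset.range (m+1), ∑ k ∈ Finset.range (m+1),
        uu a b c d m j * ww a b c d m k * (x ^ j * y ^ (m - j) * (x ^ k * y ^ (m - k))) := by
    rw [Finset.sum_comm]
    exact Finset.sum_congr rfl fun j _ => Finset.sum_congr rfl fun k _ => by ring
  have hsplit : ∑ j ∈ Finset.range (m+1), ∑ k ∈ Finset.range (m+1),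
        ((uu a b c d m j * ww a b c d m k + ww a b c d m j * uu a b c d m k
            - 2 * vv a b c d m j * vv a b c d m k)
          * (x ^ j * y ^ (m - j) * (x ^ k * y ^ (m - k))))
      = (∑ j ∈ Finset.range (m+1), ∑ k ∈ Finset.range (m+1),
          uu a b c d m j * ww a b c d m k * (x ^ j * y ^ (m - j) * (x ^ k * y ^ (m - k))))
        + (∑ j ∈ Finset.range (m+1), ∑ k ∈ Finset.range (m+1),
          ww a b c d m j * uu a b c d m k * (x ^ j * y ^ (m - j) * (x ^ k * y ^ (m - k))))
        - 2 * (∑ j ∈ Finset.range (m+1), ∑ k ∈ Finset.range (m+1),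
          vv a b c d m j * vv a b c d m k * (x ^ j * y ^ (m - j) * (x ^ k * y ^ (m - k)))) := by
    refine Eq.symm ?_
    rw [← Finset.sum_add_distrib, Finset.mul_sum, ← Finset.sum_sub_distrib]
    refine Finset.sum_congr rfl fun j _ => ?_
    rw [← Finset.sum_add_distrib, Finset.mul_sum, ← Finset.sum_sub_distrib]
    exact Finset.sum_congr rfl fun k _ => by ring
  rw [hsplit, hswap, hprod (uu a b c d m), hprod]
  ring

/-- Lower bound for twice the determinant of the Hessian of `Φ_n`. -/
theorem det_Hess_lower_bound (a b c d : ℝ) (ha : 0 < a) (hb : 0 < b) (hc : 0 < c)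
    (hd : 0 < d) (habcd : b * c < a * d) (n : ℕ) (hn : 2 ≤ n) :
    0 < Ajk a b c d n 0 0 ∧ 0 < Ajk a b c d n (n - 2) (n - 2) ∧
    ∀ x y : ℝ, 0 ≤ x → 0 ≤ y →
      ((n : ℝ) - 1) * Ajk a b c d n (n - 2) (n - 2) * x ^ (2 * n - 4) +
          ((n : ℝ) - 1) * Ajk a b c d n 0 0 * y ^ (2 * n - 4) ≤
        2 * (Hess (Phi a b c d n) x y).det := by
  obtain ⟨m, rfl⟩ : ∃ m, n = m + 2 := ⟨n - 2, by omega⟩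
  have h00 : 0 < Ajk a b c d (m+2) 0 0 := Ajj_pos ha hb hc hd habcd (Nat.zero_le m)
  have hmm : 0 < Ajk a b c d (m+2) m m := Ajj_pos ha hb hc hd habcd le_rfl
  rw [show m + 2 - 2 = m from by omega]
  refine ⟨h00, hmm, ?_⟩
  intro x y hx hy
  rw [show 2 * (m + 2) - 4 = m + m from by omega]
  have hdet : (Hess (Phi a b c d (m+2)) x y).det
      = pd1 (pd1 (Phi a b c d (m+2))) x y * pd2 (pd2 (Phi a b c d (m+2))) x y
        - pd1 (pd2 (Phi a b c d (m+2))) x y * pd2 (pd1 (Phi a b c d (m+2))) x y := by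
    simp [Hess, Matrix.det_fin_two_of]
  rw [hdet, hxx_Phi, hyy_Phi, hxy_Phi, hyx_Phi, reindex_xx, reindex_yy, reindex_xy,
    expand_det]
  -- now bound the big sum from below by the two extreme terms
  have hsub : ({(0,0), (m,m)} : Finset (ℕ × ℕ)) ⊆ Finset.range (m+1) ×ˢ Finset.range (m+1) := by
    intro p hp
    simp only [Finset.mem_insert, Finset.mem_singleton] at hp
    rcases hp with rfl | rfl <;> simp [Finset.mem_product]
  have hstep : ∑ p ∈ ({(0,0), (m,m)} : Finset (ℕ × ℕ)),
        (uu a b c d m p.1 * ww a b c d m p.2 + ww a b c d m p.1 * uu a b c d m p.2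
          - 2 * vv a b c d m p.1 * vv a b c d m p.2)
          * (x ^ p.1 * y ^ (m - p.1) * (x ^ p.2 * y ^ (m - p.2)))
      ≤ ∑ p ∈ Finset.range (m+1) ×ˢ Finset.range (m+1),
        (uu a b c d m p.1 * ww a b c d m p.2 + ww a b c d m p.1 * uu a b c d m p.2
          - 2 * vv a b c d m p.1 * vv a b c d m p.2)
          * (x ^ p.1 * y ^ (m - p.1) * (x ^ p.2 * y ^ (m - p.2))) := by
    refine Finset.sum_le_sum_of_subset_of_nonneg hsub ?_
    intro p hp _
    have hp1 : p.1 ≤ m := by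
      have := (Finset.mem_product.1 hp).1
      simpa [Nat.lt_succ_iff] using this
    have hp2 : p.2 ≤ m := by
      have := (Finset.mem_product.1 hp).2
      simpa [Nat.lt_succ_iff] using this
    refine mul_nonneg (key_nonneg ha hb hc hd habcd hp1 hp2) ?_
    positivity
  refine le_trans ?_ hstep
  have hTm := Tjj a b c d m m
  have hT0 := Tjj a b c d m 0
  rcases Nat.eq_zero_or_pos m with rfl | hm
  · -- m = 0 : the two extreme pairs coincide
    simp only [show ({((0:ℕ),(0:ℕ)), (0,0)} : Finset (ℕ × ℕ)) = {(0,0)} from by simp,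
      Finset.sum_singleton]
    simp only [Nat.sub_self, pow_zero, Nat.add_zero, Nat.zero_add]
    push_cast at hT0 ⊢
    nlinarith [hT0]
  · have hne : ((0,0) : ℕ × ℕ) ∉ ({(m,m)} : Finset (ℕ × ℕ)) := by
      simp only [Finset.mem_singleton, Prod.mk.injEq, not_and]
      intro h
      omega
    rw [show ({((0:ℕ),(0:ℕ)), (m,m)} : Finset (ℕ × ℕ)) = insert (0,0) {(m,m)} from rfl,
      Finset.sum_insert hne, Finset.sum_singleton]
    simp only [Nat.sub_self, Nat.sub_zero, pow_zero, one_mul, mul_one]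
    have hx2 : (0:ℝ) ≤ x ^ m * x ^ m := by positivity
    have hy2 : (0:ℝ) ≤ y ^ m * y ^ m := by positivity
    have hxm : x ^ (m + m) = x ^ m * x ^ m := by rw [pow_add]
    have hym : y ^ (m + m) = y ^ m * y ^ m := by rw [pow_add]
    rw [hxm, hym]
    push_cast at hTm hT0 ⊢
    nlinarith [mul_nonneg (mul_nonneg (by positivity : (0:ℝ) ≤ (m:ℝ)+1) hmm.le) hx2,
      mul_nonneg (mul_nonneg (by positivity : (0:ℝ) ≤ (m:ℝ)+1) h00.le) hy2,
      mul_le_mul_of_nonneg_right (le_refl (2*((m:ℝ)+1))) hx2]
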